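/- Assume K = k_i + k_j = 4, and let w = (x⁻¹, (k_l/2)·x⁻²) ∈ V. Then E(w) ∈ B, F(w) ∈ B, w ∉ B, and every z ∈ V with E(z) ∈ B and F(z) ∈ B satisfies z ∈ ℂ·w + B. In other words, the 𝔰-invariant part of H¹(ℂℙ¹, T₂^{ij}) is one-dimensional, spanned by the class of w. -/

import Mathlib

noncomputable section

open LaurentPolynomial

/-- `L = ℂ[x, x⁻¹]`, the Laurent polynomials over `ℂ`. -/
abbrev L : Type := LaurentPolynomial ℂ

/-- The coefficient of `x^n` in a Laurent polynomial. -/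
def coeffL (p : L) (n : ℤ) : ℂ := (AddMonoidAlgebra.coeff p : ℤ →₀ ℂ) n

lemma coeffL_zero (n : ℤ) : coeffL 0 n = 0 := rfl

lemma coeffL_add (a b : L) (n : ℤ) : coeffL (a + b) n = coeffL a n + coeffL b n := by
  unfold coeffL; erw [Finsupp.add_apply]; rfl

lemma coeffL_smul (c : ℂ) (a : L) (n : ℤ) : coeffL (c • a) n = c * coeffL a n := by
  unfold coeffL; erw [Finsupp.smul_apply]; rfl

/-- `L₊`: Laurent polynomials involving only nonnegative powers of `x`. -/
def Lplus : Submodule ℂ L where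
  carrier := {p | ∀ n : ℤ, n < 0 → coeffL p n = 0}
  zero_mem' := fun n _ => coeffL_zero n
  add_mem' := by intro a b ha hb n hn; rw [coeffL_add, ha n hn, hb n hn, add_zero]
  smul_mem' := by intro c p hp n hn; rw [coeffL_smul, hp n hn, mul_zero]

/-- `L₋`: Laurent polynomials involving only nonpositive powers of `x`. -/
def Lminus : Submodule ℂ L where
  carrier := {p | ∀ n : ℤ, 0 < n → coeffL p n = 0}
  zero_mem' := fun n _ => coeffL_zero n
  add_mem' := by intro a b ha hb n hn; rw [coeffL_add, ha n hn, hb n hn, add_zero]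
  smul_mem' := by intro c p hp n hn; rw [coeffL_smul, hp n hn, mul_zero]

/-- The derivative `d/dx` on Laurent polynomials. -/
def D (p : L) : L := Finsupp.sum (AddMonoidAlgebra.coeff p : ℤ →₀ ℂ) fun n a => ((n : ℂ) * a) • T (n - 1)

/-- `V = L × L`, the model of Čech 1-cochains with values in `T₂^{ij}`:
a pair `(a, b)` encodes `a(x)ξᵢξⱼ∂/∂x + b(x)ξᵢξⱼξₗ∂/∂ξₗ` on `U₀ ∩ U₁`. -/
abbrev V : Type := L × L

/-- `B₀ = L₊ × L₊`: cochains holomorphic in `U₀`. -/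
def B0 : Submodule ℂ V := Lplus.prod Lplus

/-- `B₁`: cochains holomorphic in `U₁`, i.e. pairs `(a, b)` with
`x^(K-2)·a ∈ L₋` and `x^K·(b - kl·x⁻¹·a) ∈ L₋`. -/
def B1 (K kl : ℤ) : Submodule ℂ V :=
  Lminus.comap ((LinearMap.mulLeft ℂ (T (K - 2))).comp (LinearMap.fst ℂ L L)) ⊓
  Lminus.comap ((LinearMap.mulLeft ℂ (T K)).comp
    (LinearMap.snd ℂ L L - (kl : ℂ) • (LinearMap.mulLeft ℂ (T (-1))).comp (LinearMap.fst ℂ L L)))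

/-- The coboundary subspace `B = B₀ + B₁`. -/
def B (K kl : ℤ) : Submodule ℂ V := B0 ⊔ B1 K kl

/-- Action of `e = ∂/∂x` on cocycles: `E(a, b) = (a′, b′)`. -/
def Eop : V → V := fun p => (D p.1, D p.2)

/-- Action of `f = ∂/∂y` on cocycles:
`F(a, b) = ((2−K)·x·a − x²·a′, kl·a − K·x·b − x²·b′)`. -/
def Fop (K kl : ℤ) : V → V := fun p =>
  (((2 - K : ℤ) : ℂ) • (T 1 * p.1) - T 2 * D p.1,
   (kl : ℂ) • p.1 - (K : ℂ) • (T 1 * p.2) - T 2 * D p.2)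


lemma coeffL_sub (a b : L) (n : ℤ) : coeffL (a - b) n = coeffL a n - coeffL b n := by
  unfold coeffL; erw [Finsupp.sub_apply]; rfl

lemma coeffL_T (n m : ℤ) : coeffL (T n) m = if n = m then 1 else 0 := by
  unfold coeffL; exact LaurentPolynomial.T_apply m n

lemma coeffL_T_mul (n : ℤ) (p : L) (m : ℤ) : coeffL (T n * p) m = coeffL p (m - n) := by
  unfold coeffL
  show (AddMonoidAlgebra.coeff (AddMonoidAlgebra.single n (1:ℂ) * p)) m = _
  rw [AddMonoidAlgebra.coeff_single_mul_apply, one_mul]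
  congr 1; ring

lemma coeffL_D (p : L) (n : ℤ) : coeffL (D p) n = ((n + 1 : ℤ) : ℂ) * coeffL p (n + 1) := by
  have h : ∀ m : ℤ, ∀ a : ℂ, coeffL (((m:ℂ) * a) • T (m-1)) n
      = if m = n+1 then ((m:ℂ) * a) else 0 := by
    intro m a
    rw [coeffL_smul, coeffL_T]
    by_cases h1 : m - 1 = n
    · rw [if_pos h1, if_pos (by omega), mul_one]
    · rw [if_neg h1, if_neg (by omega), mul_zero]
  unfold coeffL D
  rw [AddMonoidAlgebra.coeff_finsuppSum]
  erw [Finsupp.sum_apply]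
  rw [Finsupp.sum]
  calc (∑ m ∈ (AddMonoidAlgebra.coeff p).support, coeffL (((m:ℂ) * (AddMonoidAlgebra.coeff p) m) • T (m-1)) n)
      = ∑ m ∈ (AddMonoidAlgebra.coeff p).support, if m = n+1 then ((m:ℂ) * (AddMonoidAlgebra.coeff p) m) else 0 :=
        Finset.sum_congr rfl fun m _ => h m _
    _ = _ := by
        rw [Finset.sum_ite_eq' (AddMonoidAlgebra.coeff p).support (n+1) (fun m => (m:ℂ) * (AddMonoidAlgebra.coeff p) m)]
        split_ifs with hmem
        · push_cast; ring
        · rw [Finsupp.notMem_support_iff.mp hmem, mul_zero]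

def truncL (k : ℤ) (p : L) : L := AddMonoidAlgebra.ofCoeff (Finsupp.filter (fun n => n ≤ k) (AddMonoidAlgebra.coeff p))

lemma coeffL_truncL (k : ℤ) (p : L) (n : ℤ) :
    coeffL (truncL k p) n = if n ≤ k then coeffL p n else 0 := by
  unfold coeffL truncL; erw [Finsupp.filter_apply]

lemma mem_Lplus_iff {p : L} : p ∈ Lplus ↔ ∀ n : ℤ, n < 0 → coeffL p n = 0 := Iff.rfl

lemma mem_Lminus_iff {p : L} : p ∈ Lminus ↔ ∀ n : ℤ, 0 < n → coeffL p n = 0 := Iff.rfl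

lemma mem_B1_iff (K kl : ℤ) (z : V) :
    z ∈ B1 K kl ↔ (∀ n : ℤ, 0 < n → coeffL z.1 (n - (K - 2)) = 0) ∧
      (∀ n : ℤ, 0 < n → coeffL z.2 (n - K) = (kl:ℂ) * coeffL z.1 (n - K + 1)) := by
  have key : ∀ n : ℤ, coeffL (T K * (z.2 - (kl:ℂ) • (T (-1) * z.1))) n
      = coeffL z.2 (n - K) - (kl:ℂ) * coeffL z.1 (n - K + 1) := by
    intro n
    rw [coeffL_T_mul, coeffL_sub, coeffL_smul, coeffL_T_mul, sub_neg_eq_add]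
  rw [B1, Submodule.mem_inf, Submodule.mem_comap, Submodule.mem_comap]
  simp only [LinearMap.comp_apply, LinearMap.mulLeft_apply, LinearMap.fst_apply,
    LinearMap.snd_apply, LinearMap.sub_apply, LinearMap.smul_apply, mem_Lminus_iff]
  constructor
  · rintro ⟨h1, h2⟩
    refine ⟨fun n hn => ?_, fun n hn => ?_⟩
    · have := h1 n hn; rwa [coeffL_T_mul] at this
    · have := h2 n hn; rw [key] at this; exact sub_eq_zero.mp this
  · rintro ⟨h1, h2⟩
    refine ⟨fun n hn => ?_, fun n hn => ?_⟩
    · rw [coeffL_T_mul]; exact h1 n hn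
    · rw [key, h2 n hn, sub_self]

lemma mem_B_iff (kl : ℤ) (z : V) :
    z ∈ B 4 kl ↔ coeffL z.1 (-1) = 0 ∧ coeffL z.2 (-1) = 0 ∧ coeffL z.2 (-2) = 0 ∧
      coeffL z.2 (-3) = (kl:ℂ) * coeffL z.1 (-2) := by
  constructor
  · intro h
    rw [B, Submodule.mem_sup] at h
    obtain ⟨y, hy, u, hu, hsum⟩ := h
    rw [B0, Submodule.mem_prod, mem_Lplus_iff, mem_Lplus_iff] at hy
    rw [mem_B1_iff] at hu
    obtain ⟨hy1, hy2⟩ := hy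
    obtain ⟨hu1, hu2⟩ := hu
    have hz1 : ∀ m : ℤ, coeffL z.1 m = coeffL y.1 m + coeffL u.1 m := by
      intro m; rw [← coeffL_add]
      have : y.1 + u.1 = z.1 := congrArg Prod.fst hsum
      rw [this]
    have hz2 : ∀ m : ℤ, coeffL z.2 m = coeffL y.2 m + coeffL u.2 m := by
      intro m; rw [← coeffL_add]
      have : y.2 + u.2 = z.2 := congrArg Prod.snd hsum
      rw [this]
    have hu1' : ∀ m : ℤ, -2 < m → coeffL u.1 m = 0 := by
      intro m hm
      have := hu1 (m + 2) (by omega)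
      convert this using 2; omega
    have hu2' : ∀ m : ℤ, -4 < m → coeffL u.2 m = (kl:ℂ) * coeffL u.1 (m + 1) := by
      intro m hm
      have := hu2 (m + 4) (by omega)
      convert this using 3 <;> omega
    refine ⟨?_, ?_, ?_, ?_⟩
    · rw [hz1, hy1 (-1) (by omega), hu1' (-1) (by omega), add_zero]
    · rw [hz2, hy2 (-1) (by omega), hu2' (-1) (by omega)]
      norm_num [hu1' 0 (by omega)]
    · rw [hz2, hy2 (-2) (by omega), hu2' (-2) (by omega)]
      norm_num [hu1' (-1) (by omega)]
    · rw [hz2, hz1, hy2 (-3) (by omega), hy1 (-2) (by omega),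
        hu2' (-3) (by omega), zero_add, zero_add]
      norm_num
  · rintro ⟨h1, h2, h3, h4⟩
    rw [B, Submodule.mem_sup]
    refine ⟨z - (truncL (-2) z.1, truncL (-3) z.2), ?_, (truncL (-2) z.1, truncL (-3) z.2),
      ?_, by abel⟩
    · rw [B0, Submodule.mem_prod, mem_Lplus_iff, mem_Lplus_iff]
      constructor
      · intro n hn
        show coeffL (z.1 - truncL (-2) z.1) n = 0
        rw [coeffL_sub, coeffL_truncL]
        by_cases hn2 : n ≤ -2
        · rw [if_pos hn2, sub_self]
        · rw [if_neg hn2, sub_zero]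
          have : n = -1 := by omega
          rw [this]; exact h1
      · intro n hn
        show coeffL (z.2 - truncL (-3) z.2) n = 0
        rw [coeffL_sub, coeffL_truncL]
        by_cases hn2 : n ≤ -3
        · rw [if_pos hn2, sub_self]
        · rw [if_neg hn2, sub_zero]
          have : n = -2 ∨ n = -1 := by omega
          rcases this with h | h <;> rw [h] <;> assumption
    · rw [mem_B1_iff]
      constructor
      · intro n hn
        show coeffL (truncL (-2) z.1) (n - (4 - 2)) = 0
        rw [coeffL_truncL, if_neg (by omega)]
      · intro n hn
        show coeffL (truncL (-3) z.2) (n - 4) = (kl:ℂ) * coeffL (truncL (-2) z.1) (n - 4 + 1)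
        rw [coeffL_truncL, coeffL_truncL]
        by_cases hn1 : n = 1
        · subst hn1; norm_num; convert h4 using 2
        · rw [if_neg (by omega), if_neg (by omega), mul_zero]

/-- If `K = kᵢ + kⱼ = 4`, the 𝔰-invariant part of `H¹(ℂℙ¹, T₂^{ij})` is
one-dimensional, spanned by the class of `w = (x⁻¹, (kl/2)·x⁻²)`. -/
theorem stmt_4 (ki kj kl K : ℤ) (hK : K = ki + kj) (hK4 : K = 4)
    (w : V) (hw : w = (T (-1), ((kl : ℂ) / 2) • T (-2))) :
    Eop w ∈ B K kl ∧ Fop K kl w ∈ B K kl ∧ w ∉ B K kl ∧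
    ∀ z : V, Eop z ∈ B K kl → Fop K kl z ∈ B K kl →
      ∃ c : ℂ, z - c • w ∈ B K kl := by
  subst hK4
  subst hw
  refine ⟨?_, ?_, ?_, ?_⟩
  · rw [mem_B_iff]
    simp only [Eop, coeffL_D, coeffL_smul, coeffL_T]
    norm_num
    ring
  · rw [mem_B_iff]
    simp only [Fop, coeffL_sub, coeffL_smul, coeffL_T_mul, coeffL_D, coeffL_T]
    norm_num
    ring
  · rw [mem_B_iff]
    intro h
    have := h.1
    simp only [coeffL_T] at this
    norm_num at this
  · intro z hE hF
    rw [mem_B_iff] at hE hF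
    obtain ⟨hE1, hE2, hE3, hE4⟩ := hE
    obtain ⟨hF1, hF2, hF3, hF4⟩ := hF
    simp only [Eop, coeffL_D] at hE3 hE4
    simp only [Fop, coeffL_sub, coeffL_smul, coeffL_T_mul, coeffL_D] at hF3
    norm_num at hE3 hE4 hF3
    refine ⟨coeffL z.1 (-1), ?_⟩
    rw [mem_B_iff]
    simp only [Prod.fst_sub, Prod.snd_sub, Prod.smul_fst, Prod.smul_snd,
      coeffL_sub, coeffL_smul, coeffL_T]
    norm_num
    refine ⟨?_, ?_, ?_⟩
    · exact hE3
    · linear_combination hE4 / 2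
    · linear_combination -hF3
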